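/- Let k be a field and let m be a field extension of k which is finitely generated as a field extension (i.e., m is generated as a field over k by finitely many elements), and let B be a commutative m-algebra of finite type. Then there exist a k-subalgebra R of m which is an integral domain of finite type over k and has m as its field of fractions (i.e., m is a localization of R at R∖{0}, so IsFractionRing R m holds), and a finite type R-algebra B₀, together with an isomorphism of m-algebras m ⊗_R B₀ ≅ B. -/

import Mathlib

open TensorProduct

open MvPolynomial in
/-- Lift a multivariate polynomial whose coefficients all lie in a subalgebra. -/
noncomputable def MvPolynomial.liftCoeffs {σ k m : Type*} [Field k] [Field m] [Algebra k m]
    (R : Subalgebra k m) (p : MvPolynomial σ m) (h : ∀ d, p.coeff d ∈ R) :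
    MvPolynomial σ R :=
  ∑ d ∈ p.support, monomial d (⟨p.coeff d, h d⟩ : R)

open MvPolynomial in
lemma MvPolynomial.map_liftCoeffs {σ k m : Type*} [Field k] [Field m] [Algebra k m]
    (R : Subalgebra k m) (p : MvPolynomial σ m) (h : ∀ d, p.coeff d ∈ R) :
    MvPolynomial.map (algebraMap R m) (p.liftCoeffs R h) = p := by
  set_option synthInstance.maxHeartbeats 800000 in
  rw [liftCoeffs, map_sum]
  simp only [map_monomial]
  exact p.support_sum_monomial_coeff

set_option maxHeartbeats 2000000 in
set_option synthInstance.maxHeartbeats 2000000 in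
theorem descend_finiteType_algebra_to_model_of_ground_field
    {k m : Type} [Field k] [Field m] [Algebra k m]
    (hfg : (⊤ : IntermediateField k m).FG)
    (B : Type) [CommRing B] [Algebra m B] [Algebra.FiniteType m B] :
    ∃ R : Subalgebra k m,
      IsDomain R ∧ Algebra.FiniteType k R ∧ IsFractionRing R m ∧
        ∃ (B₀ : Type) (cB₀ : CommRing B₀),
          letI : CommRing B₀ := cB₀
          ∃ aB₀ : Algebra R B₀,
            letI : Algebra R B₀ := aB₀
            Algebra.FiniteType R B₀ ∧ Nonempty ((m ⊗[R] B₀) ≃ₐ[m] B) := by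
  classical
  obtain ⟨S, hS⟩ := hfg
  obtain ⟨n, f, hf⟩ := Algebra.FiniteType.iff_quotient_mvPolynomial''.mp
    (inferInstance : Algebra.FiniteType m B)
  -- the kernel is finitely generated
  obtain ⟨s, hs⟩ : (RingHom.ker f).FG := IsNoetherian.noetherian _
  -- the model ring
  set U : Set m := ↑S ∪ ⋃ p ∈ (s : Set (MvPolynomial (Fin n) m)), (p.coeffs : Set m) with hU
  have hUfin : U.Finite := (S.finite_toSet).union (Set.Finite.biUnion s.finite_toSet
    (fun p _ => p.coeffs.finite_toSet))
  set R : Subalgebra k m := Algebra.adjoin k U with hR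
  -- every element of `m` is a ratio of elements of `R`
  have hadj : IntermediateField.adjoin k U = ⊤ := by
    rw [← top_le_iff, ← hS]
    exact IntermediateField.adjoin.mono k _ _ Set.subset_union_left
  have hdiv : ∀ x : m, ∃ a b : R, x = (a : m) / (b : m) := by
    intro x
    have hx : x ∈ IntermediateField.adjoin k U := by rw [hadj]; trivial
    rw [IntermediateField.mem_adjoin_iff] at hx
    obtain ⟨r, sp, hx⟩ := hx
    have haux : ∀ q : MvPolynomial U k, MvPolynomial.aeval (Subtype.val : U → m) q ∈ R := by
      intro q
      have hmem : MvPolynomial.aeval (Subtype.val : U → m) q ∈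
          Algebra.adjoin k (Set.range (Subtype.val : U → m)) := by
        rw [Algebra.adjoin_range_eq_range_aeval]
        exact ⟨q, rfl⟩
      rwa [Subtype.range_coe] at hmem
    exact ⟨⟨_, haux r⟩, ⟨_, haux sp⟩, hx⟩
  have hinj : Function.Injective (algebraMap R m) := Subtype.val_injective
  have hfrac : IsFractionRing R m := by
    refine ⟨?_, ?_, ?_⟩
    · rintro ⟨y, hy⟩
      have hy0 : (y : m) ≠ 0 := fun h0 => nonZeroDivisors.ne_zero hy (Subtype.ext h0)
      exact isUnit_iff_ne_zero.mpr hy0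
    · intro z
      obtain ⟨a, b, hz⟩ := hdiv z
      by_cases hb : b = 0
      · refine ⟨⟨0, 1⟩, ?_⟩
        rw [hb] at hz
        simp_all
      · refine ⟨⟨a, ⟨b, mem_nonZeroDivisors_of_ne_zero hb⟩⟩, ?_⟩
        have hbm : (b : m) ≠ 0 := fun h => hb (Subtype.ext h)
        show z * (b : m) = (a : m)
        rw [hz, div_mul_cancel₀ _ hbm]
    · intro x y h
      exact ⟨1, by simpa using Subtype.ext h⟩
  refine ⟨R, inferInstance, ?_, hfrac, ?_⟩
  · rw [← Subalgebra.fg_iff_finiteType]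
    exact Subalgebra.fg_def.mpr ⟨U, hUfin, rfl⟩
  -- coefficients of the relations lie in `R`
  have hcoeff : ∀ p ∈ s, ∀ d, MvPolynomial.coeff d p ∈ R := by
    intro p hp d
    by_cases h0 : MvPolynomial.coeff d p = 0
    · rw [h0]; exact zero_mem R
    · apply Algebra.subset_adjoin
      exact Set.mem_union_right _ (Set.mem_biUnion hp (p.coeff_mem_coeffs d h0))
  -- the lifted relations
  let ℓ : {x // x ∈ s} → MvPolynomial (Fin n) R :=
    fun p => (p : MvPolynomial (Fin n) m).liftCoeffs R (hcoeff p p.2)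
  have hℓ : ∀ p : {x // x ∈ s},
      MvPolynomial.map (algebraMap R m) (ℓ p) = (p : MvPolynomial (Fin n) m) :=
    fun p => MvPolynomial.map_liftCoeffs R _ _
  -- the model algebra
  set I₀ : Ideal (MvPolynomial (Fin n) R) := Ideal.span (Set.range ℓ) with hI₀
  letI B₀ : Type := MvPolynomial (Fin n) R ⧸ I₀
  letI cB₀ : CommRing B₀ := Ideal.Quotient.commRing I₀
  letI aB₀ : Algebra R B₀ := Ideal.Quotient.algebra R
  refine ⟨B₀, cB₀, aB₀, ?_, ?_⟩
  · exact Algebra.FiniteType.of_surjective (Ideal.Quotient.mkₐ R I₀)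
      (Ideal.Quotient.mkₐ_surjective R I₀)
  -- the presentation of the model algebra
  have hsurj : Function.Surjective
      (MvPolynomial.aeval (R := R) fun i => Ideal.Quotient.mk I₀ (MvPolynomial.X i)) := by
    have : (MvPolynomial.aeval (R := R) fun i => Ideal.Quotient.mk I₀ (MvPolynomial.X i)) =
        Ideal.Quotient.mkₐ R I₀ := by
      apply MvPolynomial.algHom_ext
      intro i
      simp
    rw [this]
    exact Ideal.Quotient.mkₐ_surjective R I₀
  let P₀ : Algebra.Presentation R B₀ (Fin n) {x // x ∈ s} :=
    { toGenerators := Algebra.Generators.ofSurjective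
        (fun i => Ideal.Quotient.mk I₀ (MvPolynomial.X i)) hsurj
      relation := ℓ
      span_range_relation_eq_ker := by
        rw [Algebra.Generators.ker_eq_ker_aeval_val]
        show Ideal.span (Set.range ℓ) = RingHom.ker
          (MvPolynomial.aeval (R := R) fun i => Ideal.Quotient.mk I₀ (MvPolynomial.X i))
        have h1 : (MvPolynomial.aeval (R := R) fun i => Ideal.Quotient.mk I₀ (MvPolynomial.X i)) =
            Ideal.Quotient.mkₐ R I₀ := by
          apply MvPolynomial.algHom_ext
          intro i
          simp
        rw [h1]
        exact (Ideal.Quotient.mkₐ_ker R I₀).symm }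
  let P₁ := P₀.baseChange (T := m)
  have hrel : P₁.relation = fun i : {x // x ∈ s} => (i : MvPolynomial (Fin n) m) := by
    funext i
    show MvPolynomial.map (algebraMap R m) (ℓ i) = _
    exact hℓ i
  have hrange : Set.range (fun i : {x // x ∈ s} => (i : MvPolynomial (Fin n) m))
      = (↑s : Set (MvPolynomial (Fin n) m)) := Subtype.range_val
  have hker : P₁.ker = RingHom.ker f := by
    calc P₁.ker = Ideal.span (Set.range P₁.relation) := P₁.span_range_relation_eq_ker.symm
      _ = Ideal.span (↑s : Set (MvPolynomial (Fin n) m)) := by rw [hrel, hrange]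
      _ = RingHom.ker f := hs
  have e₁ : (m ⊗[R] B₀) ≃ₐ[m] (P₁.Ring ⧸ P₁.ker) :=
    (AlgEquiv.restrictScalars m P₁.quotientEquiv).symm
  have e₂ : (P₁.Ring ⧸ P₁.ker) ≃ₐ[m]
      (MvPolynomial (Fin n) m ⧸ RingHom.ker f) :=
    Ideal.quotientEquivAlgOfEq m hker
  have e₃ : (MvPolynomial (Fin n) m ⧸ RingHom.ker f) ≃ₐ[m] B :=
    Ideal.quotientKerAlgEquivOfSurjective hf
  exact ⟨(e₁.trans e₂).trans e₃⟩
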